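/- Let J = J({a_n},{b_n}) be a Jacobi matrix and let J₁ = J({a_n},{0}) be the Jacobi matrix with the same off-diagonal entries and zero diagonal. Set α = sup_n (a_n + a_{n+1}) and γ = (2 + α)⁻¹. Then for every φ ∈ ℓ²(ℤ⁺), with φ_± = (1 ± γ b)φ (pointwise multiplication), one has ⟨φ₊, (J − 2)φ₊⟩ + ⟨Uφ₋, (−2 − J)Uφ₋⟩ ≥ 2⟨φ, (J₁ − 2 + γ b²)φ⟩, where b² denotes multiplication by b(n)² and U is the unitary (Uφ)(n) = (−1)ⁿ φ(n). -/

import Mathlib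

noncomputable section

open scoped ComplexConjugate

namespace DHKS

/-- The Hilbert space ℓ²(α; ℂ). -/
abbrev L2 (α : Type*) := lp (fun _ : α => ℂ) 2

variable {α β : Type*}

lemma memℓp_two_iff (f : α → ℂ) :
    Memℓp f 2 ↔ Summable (fun n => ‖f n‖ ^ (2 : ℝ)) := by
  rw [memℓp_gen_iff (by norm_num)]
  norm_num

lemma sum_sq_le (u : L2 α) (s : Finset α) :
    ∑ n ∈ s, ‖(u : α → ℂ) n‖ ^ (2:ℝ) ≤ ‖u‖ ^ (2:ℝ) := by
  simpa using lp.sum_rpow_le_norm_rpow (p := 2) (by norm_num) u s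

lemma norm_le_of_sum_sq (u : L2 α) {C : ℝ} (hC : 0 ≤ C)
    (h : ∀ s : Finset α, ∑ n ∈ s, ‖(u : α → ℂ) n‖ ^ (2:ℝ) ≤ C ^ (2:ℝ)) : ‖u‖ ≤ C := by
  refine lp.norm_le_of_forall_sum_le (p := 2) (by norm_num) hC ?_
  simpa using h

/-- Composition with an injective map, as a continuous linear map on ℓ². -/
def compOp (σ : α → β) (hσ : Function.Injective σ) : L2 β →L[ℂ] L2 α :=
  LinearMap.mkContinuous
    { toFun := fun u => ⟨fun n => (u : β → ℂ) (σ n), by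
        apply (memℓp_two_iff _).2
        exact ((memℓp_two_iff _).1 (lp.memℓp u)).comp_injective hσ⟩
      map_add' := by
        intro u v; apply lp.ext; funext n
        simp only [lp.coeFn_add, Pi.add_apply]
      map_smul' := by
        intro c u; apply lp.ext; funext n
        simp only [lp.coeFn_smul, Pi.smul_apply, RingHom.id_apply] }
    1 (by
      intro u
      rw [one_mul]
      refine norm_le_of_sum_sq _ (norm_nonneg u) (fun s => ?_)
      classical
      calc ∑ n ∈ s, ‖(u : β → ℂ) (σ n)‖ ^ (2:ℝ)
          = ∑ m ∈ s.image σ, ‖(u : β → ℂ) m‖ ^ (2:ℝ) := by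
            rw [Finset.sum_image (fun a _ b _ h => hσ h)]
        _ ≤ ‖u‖ ^ (2:ℝ) := sum_sq_le u _)

@[simp] lemma compOp_apply (σ : α → β) (hσ : Function.Injective σ) (u : L2 β) (n : α) :
    (compOp σ hσ u : α → ℂ) n = (u : β → ℂ) (σ n) := rfl

/-- Multiplication by a bounded real-valued function, as a continuous linear map on ℓ². -/
def mulOp (V : α → ℝ) (C : ℝ) (hC : ∀ n, |V n| ≤ C) : L2 α →L[ℂ] L2 α :=
  LinearMap.mkContinuous
    { toFun := fun u => ⟨fun n => (V n : ℂ) * (u : α → ℂ) n, by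
        apply (memℓp_two_iff _).2
        have h := (((memℓp_two_iff _).1 (lp.memℓp u)).mul_left ((max C 0) ^ (2:ℝ)))
        apply Summable.of_nonneg_of_le (fun n => by positivity) (fun n => ?_) h
        have h1 : ‖(V n : ℂ) * (u : α → ℂ) n‖ = |V n| * ‖(u : α → ℂ) n‖ := by
          rw [norm_mul, Complex.norm_real, Real.norm_eq_abs]
        rw [h1, Real.mul_rpow (abs_nonneg _) (norm_nonneg _)]
        have h3 : |V n| ^ (2:ℝ) ≤ (max C 0) ^ (2:ℝ) :=
          Real.rpow_le_rpow (abs_nonneg _) (le_max_of_le_left (hC n)) (by norm_num)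
        exact mul_le_mul_of_nonneg_right h3 (by positivity)⟩
      map_add' := by
        intro u v; apply lp.ext; funext n
        simp only [lp.coeFn_add, Pi.add_apply]
        ring
      map_smul' := by
        intro c u; apply lp.ext; funext n
        simp only [lp.coeFn_smul, Pi.smul_apply, RingHom.id_apply, smul_eq_mul]
        ring }
    (max C 0) (by
      intro u
      refine norm_le_of_sum_sq _ (by positivity) (fun s => ?_)
      have key : ∀ n ∈ s, ‖(V n : ℂ) * (u : α → ℂ) n‖ ^ (2:ℝ)
          ≤ (max C 0) ^ (2:ℝ) * ‖(u : α → ℂ) n‖ ^ (2:ℝ) := by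
        intro n _
        have h1 : ‖(V n : ℂ) * (u : α → ℂ) n‖ = |V n| * ‖(u : α → ℂ) n‖ := by
          rw [norm_mul, Complex.norm_real, Real.norm_eq_abs]
        rw [h1, Real.mul_rpow (abs_nonneg _) (norm_nonneg _)]
        have h3 : |V n| ^ (2:ℝ) ≤ (max C 0) ^ (2:ℝ) :=
          Real.rpow_le_rpow (abs_nonneg _) (le_max_of_le_left (hC n)) (by norm_num)
        exact mul_le_mul_of_nonneg_right h3 (by positivity)
      calc ∑ n ∈ s, ‖(V n : ℂ) * (u : α → ℂ) n‖ ^ (2:ℝ)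
          ≤ ∑ n ∈ s, (max C 0) ^ (2:ℝ) * ‖(u : α → ℂ) n‖ ^ (2:ℝ) := Finset.sum_le_sum key
        _ = (max C 0) ^ (2:ℝ) * ∑ n ∈ s, ‖(u : α → ℂ) n‖ ^ (2:ℝ) := by rw [Finset.mul_sum]
        _ ≤ (max C 0) ^ (2:ℝ) * ‖u‖ ^ (2:ℝ) :=
            mul_le_mul_of_nonneg_left (sum_sq_le u _) (by positivity)
        _ = (max C 0 * ‖u‖) ^ (2:ℝ) :=
            (Real.mul_rpow (le_max_right _ _) (norm_nonneg _)).symm)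

@[simp] lemma mulOp_apply (V : α → ℝ) (C : ℝ) (hC : ∀ n, |V n| ≤ C) (u : L2 α) (n : α) :
    (mulOp V C hC u : α → ℂ) n = (V n : ℂ) * (u : α → ℂ) n := rfl

/-- Extension by zero along an injective map, as a continuous linear map on ℓ². -/
def extOp (σ : α → β) (hσ : Function.Injective σ) : L2 α →L[ℂ] L2 β :=
  LinearMap.mkContinuous
    { toFun := fun u => ⟨Function.extend σ (u : α → ℂ) 0, by
        apply (memℓp_two_iff _).2
        have hpt : (fun b => ‖Function.extend σ (u : α → ℂ) 0 b‖ ^ (2:ℝ))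
            = Function.extend σ (fun a => ‖(u : α → ℂ) a‖ ^ (2:ℝ)) 0 := by
          funext b
          rcases em (∃ a, σ a = b) with ⟨a, rfl⟩ | hb
          · rw [hσ.extend_apply, hσ.extend_apply]
          · rw [Function.extend_apply' _ _ _ hb, Function.extend_apply' _ _ _ hb]
            simp [Real.zero_rpow (by norm_num : (2:ℝ) ≠ 0)]
        rw [hpt, summable_extend_zero hσ]
        exact (memℓp_two_iff _).1 (lp.memℓp u)⟩
      map_add' := by
        intro u v; apply lp.ext; funext b
        simp only [lp.coeFn_add, Pi.add_apply]
        rcases em (∃ a, σ a = b) with ⟨a, rfl⟩ | hb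
        · rw [hσ.extend_apply, hσ.extend_apply, hσ.extend_apply]
          simp [lp.coeFn_add]
        · rw [Function.extend_apply' _ _ _ hb, Function.extend_apply' _ _ _ hb,
            Function.extend_apply' _ _ _ hb]
          simp
      map_smul' := by
        intro c u; apply lp.ext; funext b
        simp only [lp.coeFn_smul, Pi.smul_apply, RingHom.id_apply, smul_eq_mul]
        rcases em (∃ a, σ a = b) with ⟨a, rfl⟩ | hb
        · rw [hσ.extend_apply, hσ.extend_apply]
          simp [lp.coeFn_smul]
        · rw [Function.extend_apply' _ _ _ hb, Function.extend_apply' _ _ _ hb]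
          simp }
    1 (by
      intro u
      rw [one_mul]
      refine norm_le_of_sum_sq _ (norm_nonneg u) (fun s => ?_)
      have hpt : (fun b => ‖Function.extend σ (u : α → ℂ) 0 b‖ ^ (2:ℝ))
          = Function.extend σ (fun a => ‖(u : α → ℂ) a‖ ^ (2:ℝ)) 0 := by
        funext b
        rcases em (∃ a, σ a = b) with ⟨a, rfl⟩ | hb
        · rw [hσ.extend_apply, hσ.extend_apply]
        · rw [Function.extend_apply' _ _ _ hb, Function.extend_apply' _ _ _ hb]
          simp [Real.zero_rpow (by norm_num : (2:ℝ) ≠ 0)]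
      have hsumm : Summable (fun a => ‖(u : α → ℂ) a‖ ^ (2:ℝ)) :=
        (memℓp_two_iff _).1 (lp.memℓp u)
      calc ∑ b ∈ s, ‖Function.extend σ (u : α → ℂ) 0 b‖ ^ (2:ℝ)
          ≤ ∑' b, ‖Function.extend σ (u : α → ℂ) 0 b‖ ^ (2:ℝ) := by
            refine Summable.sum_le_tsum s (fun b _ => by positivity) ?_
            rw [hpt, summable_extend_zero hσ]; exact hsumm
        _ = ∑' a, ‖(u : α → ℂ) a‖ ^ (2:ℝ) := by
            rw [hpt, tsum_extend_zero hσ]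
        _ = ‖u‖ ^ (2:ℝ) := by
            simpa using (lp.norm_rpow_eq_tsum (p := 2) (by norm_num) u).symm)

lemma extOp_apply (σ : α → β) (hσ : Function.Injective σ) (u : L2 α) (b : β) :
    (extOp σ hσ u : β → ℂ) b = Function.extend σ (u : α → ℂ) 0 b := rfl

/-- The real quadratic form ⟨φ, A φ⟩ of an operator. -/
def quadForm (A : L2 α →L[ℂ] L2 α) (φ : L2 α) : ℝ :=
  (inner ℂ φ (A φ) : ℂ).re

/-- `E` is an eigenvalue of the bounded operator `A`. -/
def IsEigenvalue (A : L2 α →L[ℂ] L2 α) (E : ℝ) : Prop :=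
  ∃ u : L2 α, u ≠ 0 ∧ A u = (E : ℂ) • u

lemma abs_mul_sq_le {γ x Cb : ℝ} (h : |x| ≤ Cb) : |γ * x ^ 2| ≤ |γ| * Cb ^ 2 := by
  have h1 := abs_le.1 h
  rw [abs_mul, abs_of_nonneg (sq_nonneg x)]
  exact mul_le_mul_of_nonneg_left (sq_le_sq' (by linarith [h1.1]) h1.2) (abs_nonneg γ)

end DHKS

namespace DHKS

/-! ## Half-line operators on ℓ²(ℤ⁺), with ℤ⁺ = {1, 2, 3, …} realized as `ℕ+` -/

lemma pnat_succ_injective : Function.Injective (fun n : ℕ+ => n + 1) := by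
  intro a b h
  have : (a : ℕ) + 1 = (b : ℕ) + 1 := by exact_mod_cast congrArg (fun x : ℕ+ => (x : ℕ)) h
  exact PNat.coe_injective (Nat.succ_injective this)

/-- The shift `(S u)(n) = u(n+1)` on `ℓ²(ℤ⁺)`. -/
def shiftUp : L2 ℕ+ →L[ℂ] L2 ℕ+ := compOp (fun n => n + 1) pnat_succ_injective

/-- The shift `(D u)(n) = u(n-1)` for `n ≥ 2`, `(D u)(1) = 0` (the convention `u(0) = 0`). -/
def shiftDown : L2 ℕ+ →L[ℂ] L2 ℕ+ := extOp (fun n => n + 1) pnat_succ_injective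

@[simp] lemma shiftUp_apply (u : L2 ℕ+) (n : ℕ+) :
    (shiftUp u : ℕ+ → ℂ) n = (u : ℕ+ → ℂ) (n + 1) := rfl

@[simp] lemma shiftDown_apply_succ (u : L2 ℕ+) (m : ℕ+) :
    (shiftDown u : ℕ+ → ℂ) (m + 1) = (u : ℕ+ → ℂ) m := by
  exact pnat_succ_injective.extend_apply _ _ m

@[simp] lemma shiftDown_apply_one (u : L2 ℕ+) : (shiftDown u : ℕ+ → ℂ) 1 = 0 := by
  have h : ¬∃ m : ℕ+, m + 1 = 1 := by
    rintro ⟨m, hm⟩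
    exact (PNat.lt_add_left 1 m).ne' hm
  exact Function.extend_apply' (u : ℕ+ → ℂ) (0 : ℕ+ → ℂ) (1 : ℕ+) (by simpa using h)

/-- The Jacobi matrix `(J u)(n) = aₙ u(n+1) + bₙ u(n) + a_{n-1} u(n-1)` (convention `u(0) = 0`)
on `ℓ²(ℤ⁺)`, for bounded sequences `a`, `b`. -/
def jacobiOp (a b : ℕ+ → ℝ) (Ca Cb : ℝ) (ha : ∀ n, |a n| ≤ Ca) (hb : ∀ n, |b n| ≤ Cb) :
    L2 ℕ+ →L[ℂ] L2 ℕ+ :=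
  mulOp a Ca ha ∘L shiftUp + mulOp b Cb hb + shiftDown ∘L mulOp a Ca ha

lemma jacobiOp_apply_succ (a b : ℕ+ → ℝ) (Ca Cb : ℝ) (ha : ∀ n, |a n| ≤ Ca)
    (hb : ∀ n, |b n| ≤ Cb) (u : L2 ℕ+) (m : ℕ+) :
    (jacobiOp a b Ca Cb ha hb u : ℕ+ → ℂ) (m + 1) =
      (a (m+1) : ℂ) * (u : ℕ+ → ℂ) (m + 2) + (b (m+1) : ℂ) * (u : ℕ+ → ℂ) (m + 1)
        + (a m : ℂ) * (u : ℕ+ → ℂ) m := by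
  have h2 : (m : ℕ+) + 2 = (m + 1) + 1 := by ring
  simp [jacobiOp, ContinuousLinearMap.add_apply, lp.coeFn_add, Pi.add_apply, h2]

lemma jacobiOp_apply_one (a b : ℕ+ → ℝ) (Ca Cb : ℝ) (ha : ∀ n, |a n| ≤ Ca)
    (hb : ∀ n, |b n| ≤ Cb) (u : L2 ℕ+) :
    (jacobiOp a b Ca Cb ha hb u : ℕ+ → ℂ) 1 =
      (a 1 : ℂ) * (u : ℕ+ → ℂ) 2 + (b 1 : ℂ) * (u : ℕ+ → ℂ) 1 := by
  have h2 : (2 : ℕ+) = 1 + 1 := rfl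
  simp [jacobiOp, ContinuousLinearMap.add_apply, lp.coeFn_add, Pi.add_apply, h2]

/-- The free half-line discrete Schrödinger operator `J₀`:  `(J₀ u)(n) = u(n+1) + u(n-1)`
with the convention `u(0) = 0`. -/
def J0 : L2 ℕ+ →L[ℂ] L2 ℕ+ := shiftUp + shiftDown

/-- The unitary `(U φ)(n) = (-1)^n φ(n)` on `ℓ²(ℤ⁺)`. -/
def UopHalf : L2 ℕ+ →L[ℂ] L2 ℕ+ :=
  mulOp (fun n => (-1 : ℝ) ^ (n : ℕ)) 1 (fun n => by simp [abs_pow])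

end DHKS



namespace DHKS

variable {α β : Type*}

lemma inner_L2 (u v : L2 α) :
    (inner ℂ u v : ℂ) = ∑' n, conj ((u : α → ℂ) n) * (v : α → ℂ) n := by
  rw [lp.inner_eq_tsum]
  simp [RCLike.inner_apply, mul_comm]

lemma hasSum_inner_L2 (u v : L2 α) :
    HasSum (fun n => conj ((u : α → ℂ) n) * (v : α → ℂ) n) (inner ℂ u v : ℂ) := by
  have := lp.hasSum_inner (𝕜 := ℂ) u v
  simpa [RCLike.inner_apply, mul_comm] using this

lemma summable_sq (u : L2 α) : Summable (fun n => ‖(u : α → ℂ) n‖ ^ 2) := by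
  have := (memℓp_two_iff _).1 (lp.memℓp u)
  convert this using 2 with n
  rw [show (2:ℝ) = ((2:ℕ):ℝ) by norm_num, Real.rpow_natCast]

lemma tsum_sq_eq (u : L2 α) : ∑' n, ‖(u : α → ℂ) n‖ ^ 2 = ‖u‖ ^ 2 := by
  have h := lp.norm_rpow_eq_tsum (p := 2) (by norm_num) u
  have h2 : ∀ x : ℝ, x ^ (2:ℝ) = x ^ 2 := fun x => by
    rw [show (2:ℝ) = ((2:ℕ):ℝ) by norm_num, Real.rpow_natCast]
  have h3 : ∑' n, ‖(u : α → ℂ) n‖ ^ (2:ℝ) = ‖u‖ ^ (2:ℝ) := by simpa using h.symm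
  simpa [h2] using h3

lemma re_inner_self (u : L2 α) : (inner ℂ u u : ℂ).re = ‖u‖ ^ 2 := by
  have := @inner_self_eq_norm_sq ℂ _ _ _ _ u
  simpa using this

lemma mulOp_inner_symm (V : α → ℝ) (C : ℝ) (hC : ∀ n, |V n| ≤ C) (u v : L2 α) :
    (inner ℂ (mulOp V C hC u) v : ℂ) = inner ℂ u (mulOp V C hC v) := by
  rw [inner_L2, inner_L2]
  congr 1; funext n
  simp only [mulOp_apply, map_mul, Complex.conj_ofReal]
  ring

lemma ext_adjoint (σ : α → β) (hσ : Function.Injective σ) (u : L2 β) (v : L2 α) :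
    (inner ℂ u (extOp σ hσ v) : ℂ) = inner ℂ (compOp σ hσ u) v := by
  rw [inner_L2, inner_L2]
  have hsupp : Function.support
      (fun m => conj ((u : β → ℂ) m) * (extOp σ hσ v : β → ℂ) m) ⊆ Set.range σ := by
    intro m hm
    by_contra hr
    apply hm
    show conj ((u : β → ℂ) m) * (extOp σ hσ v : β → ℂ) m = 0
    rw [extOp_apply, Function.extend_apply' _ _ _ hr]
    simp
  rw [← hσ.tsum_eq hsupp]
  congr 1; funext n
  rw [compOp_apply, extOp_apply, hσ.extend_apply]

lemma mulOp_zero (C : ℝ) (hC : ∀ n : α, |(0:ℝ)| ≤ C) :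
    mulOp (fun _ : α => (0:ℝ)) C hC = 0 := by
  ext u n
  simp [mulOp_apply]

lemma jacobi_split (a b : ℕ+ → ℝ) (Ca Cb : ℝ) (ha : ∀ n, |a n| ≤ Ca) (hb : ∀ n, |b n| ≤ Cb)
    (h0 : ∀ n : ℕ+, |(fun _ : ℕ+ => (0:ℝ)) n| ≤ 0) :
    jacobiOp a b Ca Cb ha hb = jacobiOp a (fun _ => 0) Ca 0 ha h0 + mulOp b Cb hb := by
  unfold jacobiOp
  rw [mulOp_zero]
  abel

lemma mulOp_gamma_sq (b : ℕ+ → ℝ) (Cb γ : ℝ) (hb : ∀ n, |b n| ≤ Cb) :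
    mulOp (fun n => γ * b n ^ 2) (|γ| * Cb ^ 2) (fun n => abs_mul_sq_le (hb n)) =
      (γ : ℂ) • (mulOp b Cb hb ∘L mulOp b Cb hb) := by
  ext u n
  simp only [mulOp_apply, ContinuousLinearMap.smul_apply, ContinuousLinearMap.comp_apply,
    lp.coeFn_smul, Pi.smul_apply, smul_eq_mul]
  push_cast
  ring

lemma UopHalf_invol (u : L2 ℕ+) : UopHalf (UopHalf u) = u := by
  apply lp.ext; funext n
  simp only [UopHalf, mulOp_apply]
  push_cast
  rw [← mul_assoc, ← mul_pow]
  norm_num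

lemma UopHalf_inner (u v : L2 ℕ+) :
    (inner ℂ (UopHalf u) (UopHalf v) : ℂ) = inner ℂ u v := by
  have h : (inner ℂ (UopHalf u) (UopHalf v) : ℂ) = inner ℂ u (UopHalf (UopHalf v)) :=
    mulOp_inner_symm _ _ _ u (UopHalf v)
  rw [h, UopHalf_invol]

end DHKS

namespace DHKS

lemma UopHalf_coe (u : L2 ℕ+) (k : ℕ+) :
    (UopHalf u : ℕ+ → ℂ) k = (((-1:ℝ)^(k:ℕ) : ℝ) : ℂ) * (u : ℕ+ → ℂ) k := rfl

lemma jacobi_U_comm (a b : ℕ+ → ℝ) (Ca Cb : ℝ) (ha : ∀ n, |a n| ≤ Ca)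
    (hb : ∀ n, |b n| ≤ Cb) (h0 : ∀ n : ℕ+, |(fun _ : ℕ+ => (0:ℝ)) n| ≤ 0) (χ : L2 ℕ+) :
    jacobiOp a b Ca Cb ha hb (UopHalf χ) =
      UopHalf (mulOp b Cb hb χ - jacobiOp a (fun _ => 0) Ca 0 ha h0 χ) := by
  apply lp.ext; funext n
  induction n using PNat.recOn with
  | one =>
    rw [jacobiOp_apply_one, UopHalf_coe, UopHalf_coe, UopHalf_coe, lp.coeFn_sub, Pi.sub_apply,
      mulOp_apply, jacobiOp_apply_one]
    have c1 : ((1 : ℕ+) : ℕ) = 1 := rfl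
    have c2 : ((2 : ℕ+) : ℕ) = 2 := rfl
    rw [c1, c2]
    push_cast
    ring
  | succ m _ =>
    rw [jacobiOp_apply_succ, UopHalf_coe, UopHalf_coe, UopHalf_coe, UopHalf_coe, lp.coeFn_sub,
      Pi.sub_apply, mulOp_apply, jacobiOp_apply_succ]
    have c1 : ((m + 1 : ℕ+) : ℕ) = (m : ℕ) + 1 := by simp
    have c2 : ((m + 2 : ℕ+) : ℕ) = (m : ℕ) + 2 := by
      rw [PNat.add_coe]; rfl
    rw [c1, c2]
    push_cast
    rw [pow_succ, pow_succ]
    ring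

lemma core_bound (a : ℕ+ → ℝ) (Ca : ℝ) (hapos : ∀ n, 0 < a n) (ha : ∀ n, |a n| ≤ Ca)
    (h0 : ∀ n : ℕ+, |(fun _ : ℕ+ => (0:ℝ)) n| ≤ 0) (ψ : L2 ℕ+) :
    0 ≤ (⨆ n, (a n + a (n + 1))) * ‖ψ‖ ^ 2 +
      (inner ℂ ψ (jacobiOp a (fun _ => 0) Ca 0 ha h0 ψ) : ℂ).re := by
  set A := ⨆ n, (a n + a (n + 1)) with hA
  have hbdd : BddAbove (Set.range fun n => a n + a (n + 1)) := by
    refine ⟨2 * Ca, ?_⟩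
    rintro x ⟨n, rfl⟩
    have h1 := (abs_le.1 (ha n)).2
    have h2 := (abs_le.1 (ha (n + 1))).2
    dsimp only
    linarith
  have hle : ∀ n, a n + a (n + 1) ≤ A := fun n => le_ciSup hbdd n
  -- reduce to twice the shift term
  have hMa0 : (inner ℂ ψ (mulOp (fun _ : ℕ+ => (0:ℝ)) 0 h0 ψ) : ℂ) = 0 := by
    rw [mulOp_zero]; simp
  have hadj : (inner ℂ ψ (shiftDown (mulOp a Ca ha ψ)) : ℂ).re
      = (inner ℂ ψ (mulOp a Ca ha (shiftUp ψ)) : ℂ).re := by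
    have h1 : (inner ℂ ψ (shiftDown (mulOp a Ca ha ψ)) : ℂ)
        = inner ℂ (shiftUp ψ) (mulOp a Ca ha ψ) :=
      ext_adjoint _ pnat_succ_injective ψ (mulOp a Ca ha ψ)
    have h2 : (inner ℂ (mulOp a Ca ha (shiftUp ψ)) ψ : ℂ)
        = inner ℂ (shiftUp ψ) (mulOp a Ca ha ψ) := mulOp_inner_symm _ _ _ _ _
    have h3 : (inner ℂ (mulOp a Ca ha (shiftUp ψ)) ψ : ℂ)
        = conj (inner ℂ ψ (mulOp a Ca ha (shiftUp ψ)) : ℂ) := (inner_conj_symm _ _).symm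
    rw [h1, ← h2, h3, Complex.conj_re]
  have hsplit : (inner ℂ ψ (jacobiOp a (fun _ => 0) Ca 0 ha h0 ψ) : ℂ).re
      = 2 * (inner ℂ ψ (mulOp a Ca ha (shiftUp ψ)) : ℂ).re := by
    have : jacobiOp a (fun _ => 0) Ca 0 ha h0 ψ
        = mulOp a Ca ha (shiftUp ψ) + (mulOp (fun _ : ℕ+ => (0:ℝ)) 0 h0 ψ
            + shiftDown (mulOp a Ca ha ψ)) := by
      simp only [jacobiOp, ContinuousLinearMap.add_apply, ContinuousLinearMap.comp_apply]
      abel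
    rw [this, inner_add_right, inner_add_right, hMa0]
    rw [Complex.add_re, Complex.add_re, Complex.zero_re, hadj]
    ring
  rw [hsplit]
  set r := (inner ℂ ψ (mulOp a Ca ha (shiftUp ψ)) : ℂ).re with hr
  -- HasSum expression for r
  have hterm : HasSum (fun n => (conj ((ψ : ℕ+ → ℂ) n)
      * ((a n : ℂ) * (ψ : ℕ+ → ℂ) (n + 1))).re) r := by
    have h := Complex.hasSum_re (hasSum_inner_L2 ψ (mulOp a Ca ha (shiftUp ψ)))
    simpa [mulOp_apply, shiftUp_apply] using h
  have hsq : Summable (fun n : ℕ+ => ‖(ψ : ℕ+ → ℂ) n‖ ^ 2) := summable_sq ψ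
  have hsq' : Summable (fun n : ℕ+ => ‖(ψ : ℕ+ → ℂ) (n + 1)‖ ^ 2) :=
    hsq.comp_injective pnat_succ_injective
  have hCa0 : (0:ℝ) ≤ Ca := le_trans (abs_nonneg _) (ha 1)
  have hf1 : Summable (fun n : ℕ+ => a n * ‖(ψ : ℕ+ → ℂ) n‖ ^ 2) := by
    refine Summable.of_nonneg_of_le (fun n => mul_nonneg (hapos n).le (sq_nonneg _))
      (fun n => ?_) (hsq.mul_left Ca)
    exact mul_le_mul_of_nonneg_right (le_trans (le_abs_self _) (ha n)) (by positivity)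
  have hf2 : Summable (fun n : ℕ+ => a n * ‖(ψ : ℕ+ → ℂ) (n + 1)‖ ^ 2) := by
    refine Summable.of_nonneg_of_le (fun n => mul_nonneg (hapos n).le (sq_nonneg _))
      (fun n => ?_) (hsq'.mul_left Ca)
    exact mul_le_mul_of_nonneg_right (le_trans (le_abs_self _) (ha n)) (by positivity)
  -- pointwise bound
  have hpt : ∀ n : ℕ+, (-2) * (conj ((ψ : ℕ+ → ℂ) n)
      * ((a n : ℂ) * (ψ : ℕ+ → ℂ) (n + 1))).re
      ≤ a n * ‖(ψ : ℕ+ → ℂ) n‖ ^ 2 + a n * ‖(ψ : ℕ+ → ℂ) (n + 1)‖ ^ 2 := by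
    intro n
    set z := conj ((ψ : ℕ+ → ℂ) n) * (ψ : ℕ+ → ℂ) (n + 1) with hz
    have h1 : conj ((ψ : ℕ+ → ℂ) n) * ((a n : ℂ) * (ψ : ℕ+ → ℂ) (n + 1))
        = (a n : ℂ) * z := by rw [hz]; ring
    rw [h1, Complex.re_ofReal_mul]
    have h2 : |z.re| ≤ ‖(ψ : ℕ+ → ℂ) n‖ * ‖(ψ : ℕ+ → ℂ) (n + 1)‖ := by
      refine le_trans (Complex.abs_re_le_norm z) ?_
      rw [hz, norm_mul]
      simp
    have h3 := (abs_le.1 h2).1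
    have h4 := (hapos n).le
    nlinarith [sq_nonneg (‖(ψ : ℕ+ → ℂ) n‖ - ‖(ψ : ℕ+ → ℂ) (n + 1)‖)]
  have hneg : -2 * r ≤ ∑' n, (a n * ‖(ψ : ℕ+ → ℂ) n‖ ^ 2
      + a n * ‖(ψ : ℕ+ → ℂ) (n + 1)‖ ^ 2) := by
    have hls := (hterm.mul_left (-2))
    rw [← hls.tsum_eq]
    exact Summable.tsum_le_tsum hpt hls.summable (hf1.add hf2)
  -- bound the sums by A * ‖ψ‖²
  set a' : ℕ+ → ℝ := Function.extend (fun n : ℕ+ => n + 1) a 0 with ha'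
  have ha'succ : ∀ m : ℕ+, a' (m + 1) = a m := fun m =>
    pnat_succ_injective.extend_apply _ _ m
  have ha'one : a' 1 = 0 := by
    have h : ¬∃ m : ℕ+, m + 1 = 1 := by
      rintro ⟨m, hm⟩
      exact (PNat.lt_add_left 1 m).ne' hm
    rw [ha', Function.extend_apply' _ _ _ h]; rfl
  have ha'nonneg : ∀ m, 0 ≤ a' m := by
    intro m
    induction m using PNat.recOn with
    | one => rw [ha'one]
    | succ k _ => rw [ha'succ]; exact (hapos k).le
  have ha'le : ∀ m, a' m ≤ Ca := by
    intro m
    induction m using PNat.recOn with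
    | one => rw [ha'one]; exact hCa0
    | succ k _ => rw [ha'succ]; exact le_trans (le_abs_self _) (ha k)
  have hg : Summable (fun m : ℕ+ => a' m * ‖(ψ : ℕ+ → ℂ) m‖ ^ 2) := by
    refine Summable.of_nonneg_of_le (fun n => mul_nonneg (ha'nonneg n) (sq_nonneg _))
      (fun n => ?_) (hsq.mul_left Ca)
    exact mul_le_mul_of_nonneg_right (ha'le n) (by positivity)
  have hshiftle : ∑' n, a n * ‖(ψ : ℕ+ → ℂ) (n + 1)‖ ^ 2
      ≤ ∑' m, a' m * ‖(ψ : ℕ+ → ℂ) m‖ ^ 2 := by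
    refine Summable.tsum_le_tsum_of_inj (fun n : ℕ+ => n + 1) pnat_succ_injective
      (fun c _ => mul_nonneg (ha'nonneg c) (sq_nonneg _)) (fun n => ?_) hf2 hg
    rw [ha'succ]
  have hAbound : ∀ n : ℕ+, a n + a' n ≤ A := by
    intro n
    induction n using PNat.recOn with
    | one =>
      rw [ha'one]
      have h1 := hle 1
      have h2 := hapos (1 + 1)
      linarith
    | succ k _ =>
      rw [ha'succ]
      have := hle k
      linarith
  have htotal : ∑' n, (a n * ‖(ψ : ℕ+ → ℂ) n‖ ^ 2 + a n * ‖(ψ : ℕ+ → ℂ) (n + 1)‖ ^ 2)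
      ≤ A * ‖ψ‖ ^ 2 := by
    rw [Summable.tsum_add hf1 hf2]
    have h5 : ∑' n, a n * ‖(ψ : ℕ+ → ℂ) n‖ ^ 2 + ∑' m, a' m * ‖(ψ : ℕ+ → ℂ) m‖ ^ 2
        = ∑' n, (a n + a' n) * ‖(ψ : ℕ+ → ℂ) n‖ ^ 2 := by
      rw [← Summable.tsum_add hf1 hg]
      congr 1; funext n; ring
    have h6 : ∑' n, (a n + a' n) * ‖(ψ : ℕ+ → ℂ) n‖ ^ 2 ≤ ∑' n, A * ‖(ψ : ℕ+ → ℂ) n‖ ^ 2 := by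
      refine Summable.tsum_le_tsum (fun n => mul_le_mul_of_nonneg_right (hAbound n) (by positivity))
        ?_ (hsq.mul_left A)
      have : Summable (fun n : ℕ+ => a n * ‖(ψ : ℕ+ → ℂ) n‖ ^ 2
          + a' n * ‖(ψ : ℕ+ → ℂ) n‖ ^ 2) := hf1.add hg
      refine this.congr (fun n => by ring)
    have h7 : ∑' n, A * ‖(ψ : ℕ+ → ℂ) n‖ ^ 2 = A * ‖ψ‖ ^ 2 := by
      rw [tsum_mul_left, tsum_sq_eq]
    linarith [hshiftle]
  linarith [hneg, htotal]


set_option maxHeartbeats 2000000 in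
/-- Theorem 2.4: for every `φ ∈ ℓ²(ℤ⁺)`, with `φ± = (1 ± γ b)φ`,
`⟨φ₊, (J−2)φ₊⟩ + ⟨Uφ₋, (−2−J)Uφ₋⟩ ≥ 2⟨φ, (J₁ − 2 + γ b²)φ⟩`,
where `α = sup_n (aₙ + aₙ₊₁)` and `γ = (2+α)⁻¹`. -/
theorem statement2 (a b : ℕ+ → ℝ) (Ca Cb : ℝ) (hapos : ∀ n, 0 < a n)
    (ha : ∀ n, |a n| ≤ Ca) (hb : ∀ n, |b n| ≤ Cb)
    (γ : ℝ) (hγ : γ = (2 + ⨆ n, (a n + a (n + 1)))⁻¹) (φ : L2 ℕ+) :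
    quadForm (jacobiOp a b Ca Cb ha hb - ((2:ℝ):ℂ) • 1)
        ((1 + ((γ:ℝ):ℂ) • mulOp b Cb hb) φ) +
      quadForm (-(((2:ℝ):ℂ) • 1) - jacobiOp a b Ca Cb ha hb)
        (UopHalf ((1 - ((γ:ℝ):ℂ) • mulOp b Cb hb) φ)) ≥
      2 * quadForm
        (jacobiOp a (fun _ => 0) Ca 0 ha (fun n => by simp) - ((2:ℝ):ℂ) • 1 +
          mulOp (fun n => γ * b n ^ 2) (|γ| * Cb ^ 2) (fun n => abs_mul_sq_le (hb n))) φ := by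
  have h0' : ∀ n : ℕ+, |(fun _ : ℕ+ => (0:ℝ)) n| ≤ 0 := fun n => by simp
  suffices H : quadForm (jacobiOp a b Ca Cb ha hb - ((2:ℝ):ℂ) • 1)
        ((1 + ((γ:ℝ):ℂ) • mulOp b Cb hb) φ) +
      quadForm (-(((2:ℝ):ℂ) • 1) - jacobiOp a b Ca Cb ha hb)
        (UopHalf ((1 - ((γ:ℝ):ℂ) • mulOp b Cb hb) φ)) ≥
      2 * quadForm
        (jacobiOp a (fun _ => 0) Ca 0 ha h0' - ((2:ℝ):ℂ) • 1 +
          mulOp (fun n => γ * b n ^ 2) (|γ| * Cb ^ 2) (fun n => abs_mul_sq_le (hb n))) φ by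
    exact H
  -- abbreviations
  set B : L2 ℕ+ →L[ℂ] L2 ℕ+ := mulOp b Cb hb with hBdef
  set T : L2 ℕ+ →L[ℂ] L2 ℕ+ := jacobiOp a (fun _ => 0) Ca 0 ha h0' with hTdef
  -- facts about the sup
  have hbdd : BddAbove (Set.range fun n => a n + a (n + 1)) := by
    refine ⟨2 * Ca, ?_⟩
    rintro x ⟨n, rfl⟩
    have h1 := (abs_le.1 (ha n)).2
    have h2 := (abs_le.1 (ha (n + 1))).2
    dsimp only
    linarith
  set A := ⨆ n, (a n + a (n + 1)) with hAdef
  have hApos : 0 < A := lt_of_lt_of_le (by have := hapos 1; have := hapos (1 + 1); linarith)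
    (le_ciSup hbdd 1)
  have h2A : (0:ℝ) < 2 + A := by linarith
  have hγpos : 0 < γ := by rw [hγ]; exact inv_pos.2 h2A
  have hγA : γ * (2 + A) = 1 := by rw [hγ]; field_simp
  -- the three quadratic forms as polynomials in inner products
  have hsplitJ : jacobiOp a b Ca Cb ha hb = T + B := jacobi_split a b Ca Cb ha hb h0'
  have e_plus : quadForm (jacobiOp a b Ca Cb ha hb - ((2:ℝ):ℂ) • 1)
      ((1 + ((γ:ℝ):ℂ) • B) φ) =
      ((inner ℂ φ (T φ) : ℂ).re + γ * (inner ℂ φ (T (B φ)) : ℂ).re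
        + (inner ℂ φ (B φ) : ℂ).re + γ * (inner ℂ φ (B (B φ)) : ℂ).re
        - 2 * (inner ℂ φ φ : ℂ).re - 2 * γ * (inner ℂ φ (B φ) : ℂ).re)
      + γ * ((inner ℂ (B φ) (T φ) : ℂ).re + γ * (inner ℂ (B φ) (T (B φ)) : ℂ).re
        + (inner ℂ (B φ) (B φ) : ℂ).re + γ * (inner ℂ (B φ) (B (B φ)) : ℂ).re
        - 2 * (inner ℂ (B φ) φ : ℂ).re - 2 * γ * (inner ℂ (B φ) (B φ) : ℂ).re) := by
    rw [hsplitJ]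
    simp only [quadForm, ContinuousLinearMap.sub_apply, ContinuousLinearMap.add_apply,
      ContinuousLinearMap.smul_apply, ContinuousLinearMap.one_apply, map_add, map_smul,
      inner_add_left, inner_add_right, inner_smul_left, inner_smul_right, inner_sub_left,
      inner_sub_right, Complex.conj_ofReal, Complex.add_re, Complex.sub_re,
      Complex.re_ofReal_mul]
    ring
  have e_minus : quadForm (-(((2:ℝ):ℂ) • 1) - jacobiOp a b Ca Cb ha hb)
      (UopHalf ((1 - ((γ:ℝ):ℂ) • B) φ)) =
      ((inner ℂ φ (T φ) : ℂ).re - γ * (inner ℂ φ (T (B φ)) : ℂ).re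
        - (inner ℂ φ (B φ) : ℂ).re + γ * (inner ℂ φ (B (B φ)) : ℂ).re
        - 2 * (inner ℂ φ φ : ℂ).re + 2 * γ * (inner ℂ φ (B φ) : ℂ).re)
      - γ * ((inner ℂ (B φ) (T φ) : ℂ).re - γ * (inner ℂ (B φ) (T (B φ)) : ℂ).re
        - (inner ℂ (B φ) (B φ) : ℂ).re + γ * (inner ℂ (B φ) (B (B φ)) : ℂ).re
        - 2 * (inner ℂ (B φ) φ : ℂ).re + 2 * γ * (inner ℂ (B φ) (B φ) : ℂ).re) := by
    have happ : (-(((2:ℝ):ℂ) • 1) - jacobiOp a b Ca Cb ha hb)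
        (UopHalf ((1 - ((γ:ℝ):ℂ) • B) φ))
        = UopHalf (T ((1 - ((γ:ℝ):ℂ) • B) φ) - B ((1 - ((γ:ℝ):ℂ) • B) φ)
            - ((2:ℝ):ℂ) • ((1 - ((γ:ℝ):ℂ) • B) φ)) := by
      rw [ContinuousLinearMap.sub_apply, jacobi_U_comm a b Ca Cb ha hb h0']
      rw [show (-(((2:ℝ):ℂ) • (1 : L2 ℕ+ →L[ℂ] L2 ℕ+))) (UopHalf ((1 - ((γ:ℝ):ℂ) • B) φ))
          = UopHalf (-(((2:ℝ):ℂ) • ((1 - ((γ:ℝ):ℂ) • B) φ))) by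
        rw [map_neg, map_smul]
        simp only [ContinuousLinearMap.neg_apply, ContinuousLinearMap.smul_apply,
          ContinuousLinearMap.one_apply]]
      rw [← map_sub]
      congr 1
      abel
    rw [quadForm, happ, UopHalf_inner]
    simp only [ContinuousLinearMap.sub_apply, ContinuousLinearMap.add_apply,
      ContinuousLinearMap.smul_apply, ContinuousLinearMap.one_apply, map_add, map_smul, map_sub,
      inner_add_left, inner_add_right, inner_smul_left, inner_smul_right, inner_sub_left,
      inner_sub_right, Complex.conj_ofReal, Complex.add_re, Complex.sub_re,
      Complex.re_ofReal_mul]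
    ring
  have e_rhs : quadForm (T - ((2:ℝ):ℂ) • 1 +
        mulOp (fun n => γ * b n ^ 2) (|γ| * Cb ^ 2) (fun n => abs_mul_sq_le (hb n))) φ =
      (inner ℂ φ (T φ) : ℂ).re - 2 * (inner ℂ φ φ : ℂ).re + γ * (inner ℂ φ (B (B φ)) : ℂ).re := by
    rw [hBdef, mulOp_gamma_sq b Cb γ hb]
    simp only [quadForm, ContinuousLinearMap.sub_apply, ContinuousLinearMap.add_apply,
      ContinuousLinearMap.smul_apply, ContinuousLinearMap.one_apply,
      ContinuousLinearMap.comp_apply, inner_add_right, inner_smul_right, inner_sub_right,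
      Complex.add_re, Complex.sub_re, Complex.re_ofReal_mul]
  -- core positivity
  have hcore := core_bound a Ca hapos ha h0' (B φ)
  rw [← hTdef, ← hAdef] at hcore
  have ht4 : (inner ℂ (B φ) (B φ) : ℂ).re = ‖B φ‖ ^ 2 := re_inner_self (B φ)
  have ht4nn : 0 ≤ (inner ℂ (B φ) (B φ) : ℂ).re := by rw [ht4]; positivity
  rw [e_plus, e_minus, e_rhs]
  have e1 : γ * A = 1 - 2 * γ := by ring_nf; ring_nf at hγA; linarith
  set t4 := (inner ℂ (B φ) (B φ) : ℂ).re
  set t5 := (inner ℂ (B φ) (T (B φ)) : ℂ).re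
  have hcore' : 0 ≤ A * t4 + t5 := by rw [ht4]; exact hcore
  have hfinal : 0 ≤ 2 * γ ^ 2 * (A * t4 + t5) := by positivity
  have e2 : 2 * γ ^ 2 * (A * t4 + t5) = 2 * γ * t4 + 2 * γ ^ 2 * t5 - 4 * γ ^ 2 * t4 := by
    linear_combination (2 * γ * t4) * e1
  linarith [hfinal, e2]

end DHKS
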